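/- (Ditor) Let n be a positive integer and let κ be an infinite cardinal. If P is a join-semilattice of breadth at most n in which every principal ideal {y ∈ P : y ≤ x} has cardinality strictly less than κ, then every proper ideal I of P has cardinality strictly less than κ^{+(n-1)}, the (n-1)-st successor cardinal of κ. -/

import Mathlib

/-- `P` has breadth at most `n`: every nonempty finite subset `X` of `P` has a
subset `Y` with at most `n` elements and the same supremum. -/
def HasBreadthAtMost (P : Type*) [SemilatticeSup P] (n : ℕ) : Prop :=
  ∀ (X : Finset P) (hX : X.Nonempty),
    ∃ (Y : Finset P) (hY : Y.Nonempty), Y ⊆ X ∧ Y.card ≤ n ∧ X.sup' hX id = Y.sup' hY id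

universe u

open Cardinal Set

namespace DitorAux

variable {P : Type u} [SemilatticeSup P]

lemma supClosed_of_ideal {I : Set P} (hlo : IsLowerSet I) (hdir : DirectedOn (· ≤ ·) I) :
    ∀ ⦃a b : P⦄, a ∈ I → b ∈ I → a ⊔ b ∈ I := by
  intro a b ha hb
  obtain ⟨c, hc, hac, hbc⟩ := hdir a ha b hb
  exact hlo (sup_le hac hbc) hc

lemma le_succ_iterate (κ : Cardinal.{u}) (k : ℕ) : κ ≤ Order.succ^[k] κ := by
  induction k with
  | zero => exact le_rfl
  | succ k ih =>
    rw [Function.iterate_succ_apply']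
    exact ih.trans (Order.le_succ _)

lemma lt_succ_iterate (κ : Cardinal.{u}) (k : ℕ) (hk : 0 < k) : κ < Order.succ^[k] κ := by
  obtain ⟨k, rfl⟩ := Nat.exists_eq_succ_of_ne_zero hk.ne'
  rw [Function.iterate_succ_apply']
  exact (le_succ_iterate κ k).trans_lt (Order.lt_succ _)

lemma aleph0_le_succ_iterate {κ : Cardinal.{u}} (hκ : ℵ₀ ≤ κ) (k : ℕ) :
    ℵ₀ ≤ Order.succ^[k] κ := hκ.trans (le_succ_iterate κ k)

lemma sup'_const_sup {ι : Type*} (a : P) (s : Finset ι) (hs : s.Nonempty) (f : ι → P) :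
    s.sup' hs (fun i => a ⊔ f i) = a ⊔ s.sup' hs f := by
  apply le_antisymm
  · exact Finset.sup'_le _ _ fun i hi =>
      sup_le le_sup_left ((Finset.le_sup' f hi).trans le_sup_right)
  · obtain ⟨i, hi⟩ := hs
    exact sup_le ((le_sup_left (b := f i)).trans (Finset.le_sup' (fun i => a ⊔ f i) hi))
      (Finset.sup'_le _ _ fun j hj => le_sup_right.trans (Finset.le_sup' (fun i => a ⊔ f i) hj))

/-- From the bound on proper ideals (statement B at level `m`), derive a bound on the
whole semilattice (statement A at level `m+1`). -/
lemma lemA (κ : Cardinal.{u}) (hκ : ℵ₀ ≤ κ) (m : ℕ)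
    (IH : ∀ (P : Type u) [SemilatticeSup P] [Nonempty P],
      HasBreadthAtMost P (m + 1) → (∀ x : P, #(Set.Iic x) < κ) →
      ∀ I : Set P, I.Nonempty → IsLowerSet I → DirectedOn (· ≤ ·) I → I ≠ Set.univ →
      #I < Order.succ^[m] κ)
    (P : Type u) [SemilatticeSup P] [Nonempty P]
    (hbr : HasBreadthAtMost P (m + 1)) (hprin : ∀ x : P, #(Set.Iic x) < κ) :
    #P < Order.succ^[m + 1] κ := by
  classical
  by_contra hbig
  push_neg at hbig
  set μ : Cardinal.{u} := Order.succ^[m] κ with hμ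
  have hμinf : ℵ₀ ≤ μ := aleph0_le_succ_iterate hκ m
  have hκμ : κ ≤ μ := le_succ_iterate κ m
  have hsucc : Order.succ^[m + 1] κ = Order.succ μ := Function.iterate_succ_apply' _ _ _
  have hμP : μ ≤ #P := (Order.le_succ μ).trans (hsucc ▸ hbig)
  obtain ⟨S, hS⟩ := Cardinal.le_mk_iff_exists_set.mp hμP
  have hSinf : Infinite ↥S := Cardinal.infinite_iff.mpr (hS ▸ hμinf)
  -- the ideal generated by S
  set J : Set P := {z : P | ∃ F : Finset P, ∃ hF : F.Nonempty, ↑F ⊆ S ∧ z ≤ F.sup' hF id}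
    with hJdef
  have hSJ : S ⊆ J := by
    intro y hy
    exact ⟨{y}, Finset.singleton_nonempty y, by simpa using hy, by simp⟩
  have hJne : J.Nonempty := by
    have hSne : S.Nonempty := Set.nonempty_coe_sort.mp ⟨Classical.arbitrary ↥S⟩
    exact hSne.mono hSJ
  have hJlo : IsLowerSet J := by
    rintro a b hba ⟨F, hF, hFS, hb⟩
    exact ⟨F, hF, hFS, hba.trans hb⟩
  have hJdir : DirectedOn (· ≤ ·) J := by
    rintro z₁ ⟨F₁, hF₁, hFS₁, h₁⟩ z₂ ⟨F₂, hF₂, hFS₂, h₂⟩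
    have hFu : (F₁ ∪ F₂).Nonempty := hF₁.mono Finset.subset_union_left
    refine ⟨(F₁ ∪ F₂).sup' hFu id, ⟨F₁ ∪ F₂, hFu, ?_, le_rfl⟩, ?_, ?_⟩
    · intro a ha
      rcases Finset.mem_union.mp ha with h | h
      · exact hFS₁ h
      · exact hFS₂ h
    · exact h₁.trans (Finset.sup'_mono id Finset.subset_union_left hF₁)
    · exact h₂.trans (Finset.sup'_mono id Finset.subset_union_right hF₂)
  -- cardinality bound for J
  have hJcard : #J ≤ μ := by
    set ι := {F : Finset P // F.Nonempty ∧ ↑F ⊆ S}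
    have hJsub : J ⊆ ⋃ i : ι, Set.Iic (i.1.sup' i.2.1 id) := by
      rintro z ⟨F, hF, hFS, hz⟩
      exact Set.mem_iUnion.mpr ⟨⟨F, hF, hFS⟩, hz⟩
    have hι : #ι ≤ μ := by
      have hjinj : Function.Injective
          (fun i : ι => i.1.attach.image (fun a => (⟨a.1, i.2.2 a.2⟩ : ↥S))) := by
        intro i₁ i₂ h
        simp only at h
        have h' : (i₁.1.attach.image (fun a => (⟨a.1, i₁.2.2 a.2⟩ : ↥S))).image Subtype.val
            = (i₂.1.attach.image (fun a => (⟨a.1, i₂.2.2 a.2⟩ : ↥S))).image Subtype.val := by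
          rw [h]
        apply Subtype.ext
        have e : ∀ (i : ι), (i.1.attach.image
            (fun a => (⟨a.1, i.2.2 a.2⟩ : ↥S))).image Subtype.val = i.1 := by
          intro i
          rw [Finset.image_image]
          have : (Subtype.val ∘ fun a : {x // x ∈ i.1} => (⟨a.1, i.2.2 a.2⟩ : ↥S))
              = fun a : {x // x ∈ i.1} => a.1 := rfl
          rw [this, Finset.attach_image_val]
        rw [e i₁, e i₂] at h'
        exact h'
      calc #ι ≤ #(Finset ↥S) := Cardinal.mk_le_of_injective hjinj
        _ = #↥S := Cardinal.mk_finset_of_infinite ↥S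
        _ = μ := hS
    calc #J ≤ #(⋃ i : ι, Set.Iic (i.1.sup' i.2.1 id)) := Cardinal.mk_le_mk_of_subset hJsub
      _ ≤ Cardinal.sum (fun i : ι => #(Set.Iic (i.1.sup' i.2.1 id))) :=
          Cardinal.mk_iUnion_le_sum_mk
      _ ≤ Cardinal.sum (fun _ : ι => κ) :=
          Cardinal.sum_le_sum _ _ (fun i => (hprin _).le)
      _ = #ι * κ := Cardinal.sum_const' _ _
      _ ≤ μ * μ := mul_le_mul' hι hκμ
      _ = μ := Cardinal.mul_eq_self hμinf
  -- J is proper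
  have hJproper : J ≠ Set.univ := by
    intro h
    have : #P ≤ μ := by
      have := hJcard
      rw [h, Cardinal.mk_univ] at this
      exact this
    exact absurd (hbig.trans this) (by simp only [hsucc]; exact (Order.lt_succ μ).not_ge)
  have := IH P hbr hprin J hJne hJlo hJdir hJproper
  exact absurd (hS ▸ Cardinal.mk_le_mk_of_subset hSJ : μ ≤ #J) this.not_ge

/-- Statement B: in a breadth-`m+1` semilattice with small principal ideals,
every proper ideal has cardinality `< κ^{+m}`. -/
lemma lemB (κ : Cardinal.{u}) (hκ : ℵ₀ ≤ κ) (m : ℕ) :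
    ∀ (P : Type u) [SemilatticeSup P] [Nonempty P],
      HasBreadthAtMost P (m + 1) → (∀ x : P, #(Set.Iic x) < κ) →
      ∀ I : Set P, I.Nonempty → IsLowerSet I → DirectedOn (· ≤ ·) I → I ≠ Set.univ →
      #I < Order.succ^[m] κ := by
  induction m with
  | zero =>
    intro P _ _ hbr hprin I hne hlo hdir hproper
    obtain ⟨x, hx⟩ : ∃ x : P, x ∉ I := by
      by_contra h
      push_neg at h
      exact hproper (Set.eq_univ_of_forall h)
    have hsub : I ⊆ Set.Iic x := by
      intro y hy
      classical
      have hpair : ({x, y} : Finset P).Nonempty := Finset.insert_nonempty _ _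
      obtain ⟨Y, hYne, hYS, hYcard, hYsup⟩ := hbr {x, y} hpair
      obtain ⟨z, rfl⟩ := Finset.card_eq_one.mp (le_antisymm hYcard hYne.card_pos)
      have hzsup : x ⊔ y = z := by
        have h1 : ({x, y} : Finset P).sup' hpair id = x ⊔ y := by
          simp [Finset.sup'_insert]
        rw [h1, Finset.sup'_singleton] at hYsup
        exact hYsup
      rcases Finset.mem_insert.mp (hYS (Finset.mem_singleton_self z)) with hzx | hzy
      · subst hzx
        exact sup_eq_left.mp hzsup
      · rw [Finset.mem_singleton] at hzy
        subst hzy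
        exact absurd (hlo (sup_eq_right.mp hzsup) hy) hx
    exact (Cardinal.mk_le_mk_of_subset hsub).trans_lt (hprin x)
  | succ m IH =>
    intro P _ _ hbr hprin I hne hlo hdir hproper
    classical
    obtain ⟨x, hx⟩ : ∃ x : P, x ∉ I := by
      by_contra h
      push_neg at h
      exact hproper (Set.eq_univ_of_forall h)
    have hsupcl := supClosed_of_ideal hlo hdir
    -- the translated semilattice Q = x ⊔ I
    set Q : Set P := {z : P | ∃ y ∈ I, x ⊔ y = z} with hQdef
    have hQsup : ∀ ⦃a b : P⦄, a ∈ Q → b ∈ Q → a ⊔ b ∈ Q := by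
      rintro a b ⟨y₁, hy₁, rfl⟩ ⟨y₂, hy₂, rfl⟩
      exact ⟨y₁ ⊔ y₂, hsupcl hy₁ hy₂, by rw [sup_sup_sup_comm, sup_idem]⟩
    letI : SemilatticeSup ↥Q := Subtype.semilatticeSup hQsup
    haveI hQnonempty : Nonempty ↥Q := by
      obtain ⟨y, hy⟩ := hne
      exact ⟨⟨x ⊔ y, ⟨y, hy, rfl⟩⟩⟩
    -- coercion commutes with sup'
    have hvs : ∀ (Z : Finset ↥Q) (hZ : Z.Nonempty),
        (Z.sup' hZ id).1 = Z.sup' hZ (fun q => q.1) :=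
      fun Z hZ => Finset.comp_sup'_eq_sup'_comp hZ (fun q : ↥Q => q.1) (fun a b => rfl)
    -- Q has breadth at most m+1
    have hbrQ : HasBreadthAtMost ↥Q (m + 1) := by
      intro X hX
      have hyex : ∀ q : ↥Q, ∃ y, y ∈ I ∧ x ⊔ y = q.1 := by
        rintro ⟨z, y, hy, rfl⟩
        exact ⟨y, hy, rfl⟩
      choose yf hyI hyx using hyex
      have hSne : (insert x (X.image yf)).Nonempty := Finset.insert_nonempty _ _
      obtain ⟨Y, hYne, hYS, hYcard, hYsup⟩ := hbr (insert x (X.image yf)) hSne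
      have hXsupval : (X.sup' hX id).1 = x ⊔ X.sup' hX yf := by
        rw [hvs X hX]
        have h1 : X.sup' hX (fun q => (q : P)) = X.sup' hX (fun q => x ⊔ yf q) :=
          Finset.sup'_congr hX rfl (fun q _ => (hyx q).symm)
        rw [h1]
        exact sup'_const_sup x X hX yf
      have hSsup : (insert x (X.image yf)).sup' hSne id = x ⊔ X.sup' hX yf := by
        have h1 : (insert x (X.image yf)).sup' hSne id
            = id x ⊔ (X.image yf).sup' (hX.image yf) id := Finset.sup'_insert (H := hX.image yf) id
        have h2 : (X.image yf).sup' (hX.image yf) id = X.sup' hX (id ∘ yf) :=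
          Finset.sup'_image (hX.image yf) id
        rw [h1, h2]
        rfl
      by_cases hxY : x ∈ Y
      · have hY'card : (Y.erase x).card ≤ m + 1 := by
          have h1 := Finset.card_erase_of_mem hxY
          omega
        have hY'sub : ∀ b ∈ Y.erase x, ∃ q : ↥Q, q ∈ X ∧ yf q = b := by
          intro b hb
          have hbY : b ∈ Y := Finset.mem_of_mem_erase hb
          have hbne : b ≠ x := Finset.ne_of_mem_erase hb
          rcases Finset.mem_insert.mp (hYS hbY) with h | h
          · exact absurd h hbne
          · exact Finset.mem_image.mp h
        have hYins : insert x (Y.erase x) = Y := Finset.insert_erase hxY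
        by_cases hY' : (Y.erase x).Nonempty
        · -- choose preimages in X for the elements of Y.erase x
          let c : P → ↥Q := fun b =>
            if h : ∃ q : ↥Q, q ∈ X ∧ yf q = b then h.choose else Classical.arbitrary ↥Q
          have hcspec : ∀ b ∈ Y.erase x, c b ∈ X ∧ yf (c b) = b := by
            intro b hb
            have h := hY'sub b hb
            simp only [c, dif_pos h]
            exact h.choose_spec
          refine ⟨(Y.erase x).image c, hY'.image c, ?_, ?_, ?_⟩
          · intro q hq
            obtain ⟨b, hb, rfl⟩ := Finset.mem_image.mp hq
            exact (hcspec b hb).1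
          · exact Finset.card_image_le.trans hY'card
          · apply Subtype.ext
            have hL : (X.sup' hX id).1 = Y.sup' hYne id := by
              rw [hXsupval, ← hSsup]
              exact hYsup
            have hR : (((Y.erase x).image c).sup' (hY'.image c) id).1
                = Y.sup' hYne id := by
              rw [hvs _ (hY'.image c)]
              have h1 : ((Y.erase x).image c).sup' (hY'.image c) (fun q : ↥Q => q.1)
                  = (Y.erase x).sup' hY' ((fun q : ↥Q => q.1) ∘ c) :=
                Finset.sup'_image (hY'.image c) _
              have h2 : (Y.erase x).sup' hY' ((fun q : ↥Q => q.1) ∘ c)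
                  = (Y.erase x).sup' hY' (fun b => x ⊔ b) := by
                refine Finset.sup'_congr hY' rfl ?_
                intro b hb
                show (c b).1 = x ⊔ b
                rw [← (hcspec b hb).2, hyx (c b), (hcspec b hb).2]
              have h3 : (Y.erase x).sup' hY' (fun b => x ⊔ b)
                  = x ⊔ (Y.erase x).sup' hY' id := sup'_const_sup x _ hY' id
              have h4 : (insert x (Y.erase x)).sup' (Finset.insert_nonempty x _) id
                  = id x ⊔ (Y.erase x).sup' hY' id := Finset.sup'_insert (H := hY') id
              have h5 : (insert x (Y.erase x)).sup' (Finset.insert_nonempty x _) id = Y.sup' hYne id :=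
                Finset.sup'_congr (Finset.insert_nonempty x _) hYins (fun _ _ => rfl)
              rw [h1, h2, h3, ← h5, h4]
              rfl
            rw [hL, hR]
        · -- Y = {x} : the sup of X is x itself
          have hYall : ∀ b ∈ Y, b = x := by
            intro b hb
            by_contra hbx
            exact hY' ⟨b, Finset.mem_erase.mpr ⟨hbx, hb⟩⟩
          have hYsupx : Y.sup' hYne id = x :=
            le_antisymm (Finset.sup'_le _ _ (fun b hb => le_of_eq (hYall b hb)))
              (Finset.le_sup' id hxY)
          have hsX : (X.sup' hX id).1 = x := by
            rw [hXsupval, ← hSsup, hYsup, hYsupx]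
          obtain ⟨q₀, hq₀⟩ := id hX
          refine ⟨{q₀}, Finset.singleton_nonempty q₀, by simpa using hq₀, by simp, ?_⟩
          apply Subtype.ext
          have hq₀X : q₀.1 ≤ (X.sup' hX id).1 := by
            rw [hvs X hX]
            exact Finset.le_sup' (fun q : ↥Q => q.1) hq₀
          have hxq₀ : x ≤ q₀.1 := hyx q₀ ▸ le_sup_left
          have hsing : ({q₀} : Finset ↥Q).sup' (Finset.singleton_nonempty q₀) id = q₀ :=
            Finset.sup'_singleton id
          rw [hsing, hsX]
          exact le_antisymm hxq₀ (hsX ▸ hq₀X)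
      · -- x ∉ Y : contradiction
        exfalso
        have hYI : ∀ b ∈ Y, b ∈ I := by
          intro b hb
          rcases Finset.mem_insert.mp (hYS hb) with h | h
          · exact absurd (h ▸ hb) (h ▸ hxY)
          · obtain ⟨q, _, rfl⟩ := Finset.mem_image.mp h
            exact hyI q
        have hsupmem : Y.sup' hYne id ∈ I :=
          Finset.sup'_mem I (fun a ha b hb => hsupcl ha hb) Y hYne id hYI
        have hxle : x ≤ Y.sup' hYne id := by
          rw [← hYsup]
          exact Finset.le_sup' id (Finset.mem_insert_self x _)
        exact hx (hlo hxle hsupmem)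
    -- principal ideals of Q are small
    have hprinQ : ∀ q : ↥Q, #(Set.Iic q) < κ := by
      intro q
      refine lt_of_le_of_lt ?_ (hprin q.1)
      refine Cardinal.mk_le_of_injective
        (f := fun r : Set.Iic q => (⟨r.1.1, r.2⟩ : Set.Iic q.1)) ?_
      intro r₁ r₂ h
      simp only [Subtype.mk.injEq] at h
      exact Subtype.ext (Subtype.ext (Subtype.mk.inj h))
    have hQcard : #↥Q < Order.succ^[m + 1] κ := lemA κ hκ m IH ↥Q hbrQ hprinQ
    -- the fibers of I → Q, y ↦ x ⊔ y, are small
    have hmain : #I ≤ #↥Q * κ := by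
      refine Cardinal.mk_le_mk_mul_of_mk_preimage_le
        (f := fun y : ↥I => (⟨x ⊔ y.1, ⟨y.1, y.2, rfl⟩⟩ : ↥Q)) ?_
      intro q
      refine le_of_lt (lt_of_le_of_lt ?_ (hprin q.1))
      have hg : ∀ r : ↥((fun y : ↥I => (⟨x ⊔ y.1, ⟨y.1, y.2, rfl⟩⟩ : ↥Q)) ⁻¹' {q}),
          r.1.1 ≤ q.1 := by
        intro r
        have h1 : (⟨x ⊔ r.1.1, ⟨r.1.1, r.1.2, rfl⟩⟩ : ↥Q) = q := r.2
        have h2 : x ⊔ r.1.1 = q.1 := congrArg Subtype.val h1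
        exact h2 ▸ le_sup_right
      refine Cardinal.mk_le_of_injective (f := fun r => (⟨r.1.1, hg r⟩ : Set.Iic q.1)) ?_
      intro r₁ r₂ h
      simp only [Subtype.mk.injEq] at h
      exact Subtype.ext (Subtype.ext (Subtype.mk.inj h))
    refine lt_of_le_of_lt hmain ?_
    exact Cardinal.mul_lt_of_lt (aleph0_le_succ_iterate hκ (m + 1)) hQcard
      (lt_succ_iterate κ (m + 1) (Nat.succ_pos m))

end DitorAux

/-- Ditor: if `P` is a join-semilattice of breadth at most `n > 0`
whose principal ideals all have cardinality `< κ` (κ infinite), then every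
proper ideal `I` of `P` has cardinality `< κ^{+(n-1)}`. -/
theorem ditor_proper_ideal_bound {P : Type u} [SemilatticeSup P] [Nonempty P]
    (n : ℕ) (hn : 0 < n) (κ : Cardinal.{u}) (hκ : Cardinal.aleph0 ≤ κ)
    (hbr : HasBreadthAtMost P n)
    (hprin : ∀ x : P, Cardinal.mk (Set.Iic x) < κ)
    (I : Order.Ideal P) (hI : I.IsProper) :
    Cardinal.mk I < Order.succ^[n - 1] κ := by
  obtain ⟨m, rfl⟩ : ∃ m, n = m + 1 := ⟨n - 1, (Nat.succ_pred_eq_of_pos hn).symm⟩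
  simpa using DitorAux.lemB κ hκ m P hbr hprin (I : Set P) I.nonempty I.lower I.directed
    hI.ne_univ
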